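/- Let p be a prime and let k₀, D be positive integers with k₀ ≥ 2·ord_p(2D). Let A₁, …, Aₙ ∈ GL₂(ℚ_p). Then there exist α, β ∈ ℚ_p^× and e ∈ ℤ such that the matrices B_i = A_i⁻¹ · diag(p^{−e}α^D, p^{−e}β^D) · A_i (for 1 ≤ i ≤ n) satisfy: (i) every B_i has all entries in ℤ_p, and there exists an index i such that B_i ∉ p·M₂(ℤ_p) (i.e. some entry of B_i is a p-adic unit); (ii) k₀ ≤ ord_p(p^{−2e}α^Dβ^D) ≤ 3Dk₀. -/

import Mathlib

variable {p : ℕ} [Fact p.Prime]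

lemma sq_dvd_aux {R : Type*} [CommRing R] (x : R) (D : ℕ) :
    x ^ 2 ∣ (1 + x) ^ D - 1 - D * x := by
  induction D with
  | zero => simp
  | succ n ih =>
    have h : (1 + x) ^ (n + 1) - 1 - (n + 1 : ℕ) * x
        = (1 + x) * ((1 + x) ^ n - 1 - n * x) + n * x ^ 2 := by
      push_cast; ring
    rw [h]
    exact dvd_add (ih.mul_left _) (Dvd.intro_left _ rfl)

lemma padic_add_eq_of_lt {x y : ℚ_[p]} (h : ‖y‖ < ‖x‖) : ‖x + y‖ = ‖x‖ := by
  rw [Padic.add_eq_max_of_ne (ne_of_lt h).symm]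
  exact max_eq_left h.le

lemma padic_sub_eq_of_lt {x y : ℚ_[p]} (h : ‖y‖ < ‖x‖) : ‖x - y‖ = ‖x‖ := by
  rw [sub_eq_add_neg]
  exact padic_add_eq_of_lt (by rwa [norm_neg])

lemma padic_val_p_zpow (z : ℤ) : ((p : ℚ_[p]) ^ z).valuation = z := by
  have hp : (1 : ℝ) < p := by exact_mod_cast (Fact.out : p.Prime).one_lt
  have hp0 : ((p : ℚ_[p])) ≠ 0 := by exact_mod_cast (Fact.out : p.Prime).ne_zero
  have h := Padic.norm_eq_zpow_neg_valuation (zpow_ne_zero z hp0)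
  rw [Padic.norm_p_zpow] at h
  have := (zpow_right_injective₀ (by positivity) (by exact ne_of_gt hp)) h
  omega

lemma padic_val_eq_zero_of_norm_one {x : ℚ_[p]} (hx : x ≠ 0) (h : ‖x‖ = 1) :
    x.valuation = 0 := by
  have hp : (1 : ℝ) < p := by exact_mod_cast (Fact.out : p.Prime).one_lt
  have h2 := Padic.norm_eq_zpow_neg_valuation hx
  rw [h] at h2
  have : (p : ℝ) ^ (0 : ℤ) = (p:ℝ) ^ (-x.valuation) := by rw [zpow_zero]; exact h2
  have := (zpow_right_injective₀ (by positivity) (by exact ne_of_gt hp)) this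
  omega

lemma padic_norm_natCast_D (D : ℕ) (hD : 0 < D) :
    ‖(D : ℚ_[p])‖ = (p : ℝ) ^ (-(padicValNat p D : ℤ)) := by
  rw [Padic.norm_eq_zpow_neg_valuation (by exact_mod_cast hD.ne'), Padic.valuation_natCast]

lemma padic_norm_one_add_p_pow (D w : ℕ) (hD : 0 < D) (hw : padicValNat p D < w) :
    ‖((1 + (p : ℚ_[p]) ^ w) ^ D - 1)‖ = (p : ℝ) ^ (-((w + padicValNat p D : ℕ) : ℤ)) := by
  have hp1 : (1 : ℝ) < p := by exact_mod_cast (Fact.out : p.Prime).one_lt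
  have hp0 : ((p : ℚ_[p])) ≠ 0 := by exact_mod_cast (Fact.out : p.Prime).ne_zero
  obtain ⟨y, hy⟩ := sq_dvd_aux ((p : ℤ_[p]) ^ w) D
  have hy' : (1 + (p : ℚ_[p]) ^ w) ^ D - 1 - D * (p : ℚ_[p]) ^ w
      = ((p : ℚ_[p]) ^ w) ^ 2 * (y : ℚ_[p]) := by exact_mod_cast congrArg (fun z : ℤ_[p] => (z : ℚ_[p])) hy
  have hkey : (1 + (p : ℚ_[p]) ^ w) ^ D - 1
      = (D : ℚ_[p]) * (p : ℚ_[p]) ^ w + ((p : ℚ_[p]) ^ w) ^ 2 * (y : ℚ_[p]) := by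
    linear_combination hy'
  rw [hkey]
  have hn1 : ‖(D : ℚ_[p]) * (p : ℚ_[p]) ^ w‖ = (p : ℝ) ^ (-((w + padicValNat p D : ℕ) : ℤ)) := by
    rw [norm_mul, padic_norm_natCast_D D hD, Padic.norm_p_pow, ← zpow_add₀ (by positivity)]
    congr 1
    push_cast
    ring
  rw [padic_add_eq_of_lt, hn1]
  rw [hn1]
  calc ‖((p : ℚ_[p]) ^ w) ^ 2 * (y : ℚ_[p])‖
      ≤ ‖((p : ℚ_[p]) ^ w) ^ 2‖ * 1 := by
        rw [norm_mul]
        gcongr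
        exact PadicInt.padic_norm_e_of_padicInt y ▸ PadicInt.norm_le_one y
    _ = (p : ℝ) ^ (-(2 * w : ℤ)) := by
        rw [mul_one, ← pow_mul, Padic.norm_p_pow]
        congr 1
        push_cast; ring
    _ < (p : ℝ) ^ (-((w + padicValNat p D : ℕ) : ℤ)) := by
        apply zpow_lt_zpow_right₀ hp1
        omega

set_option maxHeartbeats 1000000 in
theorem stmt_2 (p : ℕ) [Fact p.Prime] (k₀ D : ℕ) (hk₀ : 0 < k₀) (hD : 0 < D)
    (hk₀D : 2 * padicValNat p (2 * D) ≤ k₀)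
    (n : ℕ) (hn : 0 < n) (A : Fin n → GL (Fin 2) ℚ_[p]) :
    ∃ (α β : ℚ_[p]) (e : ℤ), α ≠ 0 ∧ β ≠ 0 ∧
      (∀ B : Fin n → Matrix (Fin 2) (Fin 2) ℚ_[p],
        (∀ i, B i = (↑(A i)⁻¹ : Matrix (Fin 2) (Fin 2) ℚ_[p]) *
            Matrix.diagonal ![(p : ℚ_[p]) ^ (-e) * α ^ D, (p : ℚ_[p]) ^ (-e) * β ^ D] *
            (A i : Matrix (Fin 2) (Fin 2) ℚ_[p])) →
          (∀ i j k, ‖B i j k‖ ≤ 1) ∧ (∃ i j k, ‖B i j k‖ = 1)) ∧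
      (k₀ : ℤ) ≤ ((p : ℚ_[p]) ^ (-(2 * e)) * α ^ D * β ^ D).valuation ∧
      ((p : ℚ_[p]) ^ (-(2 * e)) * α ^ D * β ^ D).valuation ≤ 3 * D * k₀ := by
  have hp1 : (1 : ℝ) < p := by exact_mod_cast (Fact.out : p.Prime).one_lt
  have hppos : (0 : ℝ) < p := by positivity
  have hp0 : ((p : ℚ_[p])) ≠ 0 := by exact_mod_cast (Fact.out : p.Prime).ne_zero
  set c := padicValNat p D with hc
  have hc2 : 2 * c ≤ k₀ := by
    have h2 : padicValNat p (2 * D) = padicValNat p 2 + c :=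
      padicValNat.mul (by norm_num) hD.ne'
    omega
  set C : Fin n → Matrix (Fin 2) (Fin 2) ℚ_[p] :=
    fun i => (↑(A i)⁻¹ : Matrix (Fin 2) (Fin 2) ℚ_[p]) * Matrix.diagonal ![1, 0] *
      (A i : Matrix (Fin 2) (Fin 2) ℚ_[p]) with hCdef
  have htr : ∀ i, C i 0 0 + C i 1 1 = 1 := by
    intro i
    have h1 : Matrix.trace (C i) = 1 := by
      rw [hCdef]
      dsimp only
      rw [Matrix.trace_mul_comm, ← Matrix.mul_assoc]
      rw [show ((A i : Matrix (Fin 2) (Fin 2) ℚ_[p]) * ↑(A i)⁻¹) = 1 from Units.mul_inv _,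
        Matrix.one_mul]
      simp [Matrix.trace_fin_two]
    rw [← h1, Matrix.trace_fin_two]
  obtain ⟨t₀, -, hmax⟩ := Finset.exists_max_image (Finset.univ : Finset (Fin n × Fin 2 × Fin 2))
      (fun t => ‖C t.1 t.2.1 t.2.2‖) ⟨⟨⟨0, hn⟩, 0, 0⟩, Finset.mem_univ _⟩
  obtain ⟨i₀, j₀, l₀⟩ := t₀
  set q := C i₀ j₀ l₀ with hqdef
  have hmax' : ∀ i j l, ‖C i j l‖ ≤ ‖q‖ := fun i j l => hmax (i, j, l) (Finset.mem_univ _)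
  have h1q : (1 : ℝ) ≤ ‖q‖ := by
    calc (1 : ℝ) = ‖C i₀ 0 0 + C i₀ 1 1‖ := by rw [htr i₀]; simp
    _ ≤ max ‖C i₀ 0 0‖ ‖C i₀ 1 1‖ := Padic.nonarchimedean _ _
    _ ≤ ‖q‖ := max_le (hmax' _ _ _) (hmax' _ _ _)
  have hq0 : q ≠ 0 := by
    intro h; rw [h, norm_zero] at h1q; linarith
  have hμ : q.valuation ≤ 0 := by
    by_contra h
    push_neg at h
    rw [Padic.norm_eq_zpow_neg_valuation hq0] at h1q
    have h2 : (p : ℝ) ^ (-q.valuation) < (p : ℝ) ^ (0 : ℤ) :=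
      zpow_lt_zpow_right₀ hp1 (by omega)
    rw [zpow_zero] at h2; linarith
  set m : ℕ := (-q.valuation).toNat with hmdef
  have hmval : q.valuation = -(m : ℤ) := by omega
  have hqnorm : ‖q‖ = (p : ℝ) ^ (m : ℤ) := by
    rw [Padic.norm_eq_zpow_neg_valuation hq0, hmval, neg_neg]
  have hCle : ∀ i j l, ‖C i j l‖ ≤ (p : ℝ) ^ (m : ℤ) := by
    intro i j l; rw [← hqnorm]; exact hmax' _ _ _
  -- the key reduction
  have key : ∀ (α β : ℚ_[p]) (e : ℤ), β ≠ 0 →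
      ‖(p : ℚ_[p]) ^ (-e) * α ^ D - (p : ℚ_[p]) ^ (-e) * β ^ D‖ = (p : ℝ) ^ (-(m : ℤ)) →
      ‖(p : ℚ_[p]) ^ (-e) * β ^ D‖ < 1 →
      ∀ B : Fin n → Matrix (Fin 2) (Fin 2) ℚ_[p],
        (∀ i, B i = (↑(A i)⁻¹ : Matrix (Fin 2) (Fin 2) ℚ_[p]) *
            Matrix.diagonal ![(p : ℚ_[p]) ^ (-e) * α ^ D, (p : ℚ_[p]) ^ (-e) * β ^ D] *
            (A i : Matrix (Fin 2) (Fin 2) ℚ_[p])) →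
        (∀ i j k, ‖B i j k‖ ≤ 1) ∧ (∃ i j k, ‖B i j k‖ = 1) := by
    intro α β e hβ hsub hd2 B hB
    set d₁ := (p : ℚ_[p]) ^ (-e) * α ^ D with hd₁def
    set d₂ := (p : ℚ_[p]) ^ (-e) * β ^ D with hd₂def
    have hBi : ∀ i, B i = d₂ • (1 : Matrix (Fin 2) (Fin 2) ℚ_[p]) + (d₁ - d₂) • C i := by
      intro i
      rw [hB i]
      have hdiag : Matrix.diagonal ![d₁, d₂]
          = d₂ • (1 : Matrix (Fin 2) (Fin 2) ℚ_[p]) + (d₁ - d₂) • Matrix.diagonal ![1, 0] := by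
        ext j k
        fin_cases j <;> fin_cases k <;>
          simp [Matrix.diagonal, Matrix.one_apply] <;> ring
      rw [hdiag, Matrix.mul_add, Matrix.add_mul]
      congr 1
      · rw [Matrix.mul_smul, Matrix.smul_mul, Matrix.mul_one, Units.inv_mul]
      · rw [hCdef]
        dsimp only
        rw [Matrix.mul_smul, Matrix.smul_mul]
    have hentry : ∀ i j k, B i j k
        = d₂ * (if j = k then (1 : ℚ_[p]) else 0) + (d₁ - d₂) * C i j k := by
      intro i j k
      rw [hBi i]
      simp [Matrix.add_apply, Matrix.smul_apply, Matrix.one_apply, smul_eq_mul]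
    have hite : ∀ j k : Fin 2, ‖(if j = k then (1 : ℚ_[p]) else 0)‖ ≤ 1 := by
      intro j k; split <;> simp
    constructor
    · intro i j k
      rw [hentry i j k]
      refine le_trans (Padic.nonarchimedean _ _) (max_le ?_ ?_)
      · rw [norm_mul]
        calc ‖d₂‖ * ‖(if j = k then (1 : ℚ_[p]) else 0)‖ ≤ 1 * 1 :=
              mul_le_mul hd2.le (hite j k) (norm_nonneg _) zero_le_one
        _ = 1 := mul_one 1
      · rw [norm_mul, hsub]
        calc (p : ℝ) ^ (-(m : ℤ)) * ‖C i j k‖ ≤ (p : ℝ) ^ (-(m : ℤ)) * (p : ℝ) ^ (m : ℤ) :=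
              mul_le_mul_of_nonneg_left (hCle i j k) (by positivity)
        _ = 1 := by rw [← zpow_add₀ (ne_of_gt hppos)]; simp
    · refine ⟨i₀, j₀, l₀, ?_⟩
      rw [hentry i₀ j₀ l₀]
      have hb : ‖(d₁ - d₂) * C i₀ j₀ l₀‖ = 1 := by
        rw [norm_mul, hsub, ← hqdef, hqnorm, ← zpow_add₀ (ne_of_gt hppos)]
        simp
      have ha : ‖d₂ * (if j₀ = l₀ then (1 : ℚ_[p]) else 0)‖ < 1 := by
        rw [norm_mul]
        calc ‖d₂‖ * ‖(if j₀ = l₀ then (1 : ℚ_[p]) else 0)‖ ≤ ‖d₂‖ * 1 := by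
              gcongr
              exact hite j₀ l₀
        _ = ‖d₂‖ := mul_one _
        _ < 1 := hd2
      rw [add_comm, padic_add_eq_of_lt (lt_of_lt_of_le ha hb.ge), hb]
  set r : ℕ := (k₀ + 1) / 2 with hrdef
  have hkD1 : 1 ≤ k₀ * D := Nat.one_le_iff_ne_zero.mpr (by positivity)
  have hzlt1 : ∀ N : ℕ, 1 ≤ N → (p : ℝ) ^ (-(N : ℤ)) < 1 := by
    intro N hN
    have h := zpow_lt_zpow_right₀ hp1 (show -(N : ℤ) < 0 by omega)
    rwa [zpow_zero] at h
  by_cases hbr : m ≤ r + 2 * c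
  · -- branch 1 : α = 1, β = p^k₀, e = -m
    have hd1 : ‖(p : ℚ_[p]) ^ (-(-(m : ℤ))) * (1 : ℚ_[p]) ^ D‖ = (p : ℝ) ^ (-(m : ℤ)) := by
      rw [one_pow, mul_one, neg_neg, Padic.norm_p_zpow]
    have hd2 : ‖(p : ℚ_[p]) ^ (-(-(m : ℤ))) * ((p : ℚ_[p]) ^ k₀) ^ D‖
        < (p : ℝ) ^ (-(m : ℤ)) := by
      rw [norm_mul, neg_neg, Padic.norm_p_zpow, ← pow_mul, Padic.norm_p_pow]
      exact mul_lt_of_lt_one_right (by positivity) (hzlt1 _ hkD1)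
    refine ⟨1, (p : ℚ_[p]) ^ k₀, -(m : ℤ), one_ne_zero, pow_ne_zero _ hp0, ?_, ?_, ?_⟩
    · apply key _ _ _ (pow_ne_zero _ hp0)
      · rw [padic_sub_eq_of_lt (by rw [hd1]; exact hd2)]
        exact hd1
      · calc ‖(p : ℚ_[p]) ^ (-(-(m : ℤ))) * ((p : ℚ_[p]) ^ k₀) ^ D‖
            < (p : ℝ) ^ (-(m : ℤ)) := hd2
        _ ≤ (p : ℝ) ^ (0 : ℤ) := zpow_le_zpow_right₀ hp1.le (by omega)
        _ = 1 := zpow_zero _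
    all_goals {
      have hval : ((p : ℚ_[p]) ^ (-(2 * -(m : ℤ))) * (1 : ℚ_[p]) ^ D
          * ((p : ℚ_[p]) ^ k₀) ^ D).valuation = 2 * (m : ℤ) + (k₀ * D : ℕ) := by
        rw [show ((p : ℚ_[p]) ^ (-(2 * -(m : ℤ))) * (1 : ℚ_[p]) ^ D * ((p : ℚ_[p]) ^ k₀) ^ D)
            = (p : ℚ_[p]) ^ (2 * (m : ℤ) + (k₀ * D : ℕ)) by
          rw [one_pow, mul_one, ← pow_mul, ← zpow_natCast (p : ℚ_[p]) (k₀ * D),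
            ← zpow_add₀ hp0]
          congr 1
          push_cast
          ring]
        exact padic_val_p_zpow _
      rw [hval]
      have h2m : 2 * m ≤ 3 * k₀ + 1 := by omega
      have hlb : k₀ ≤ 2 * m + k₀ * D := by nlinarith [Nat.le_mul_of_pos_right k₀ hD]
      have hub : 2 * m + k₀ * D ≤ 3 * D * k₀ := by
        rcases Nat.lt_or_ge D 2 with hD2 | hD2
        · have hD1 : D = 1 := by omega
          subst hD1
          have hc0 : padicValNat p 1 = 0 := padicValNat.one
          omega
        · have hkD : 2 * k₀ ≤ k₀ * D := by nlinarith
          nlinarith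
      first
      | exact_mod_cast hlb
      | exact_mod_cast hub
    }
  · -- branch 2 : α = 1, β = 1 + p^w, e = -r
    push_neg at hbr
    set w : ℕ := m - r - c with hwdef
    have hwc : c < w := by omega
    have hw1 : 1 ≤ w := by omega
    have hm : r + (w + c) = m := by omega
    have hβnorm : ‖(1 : ℚ_[p]) + (p : ℚ_[p]) ^ w‖ = 1 := by
      rw [padic_add_eq_of_lt (by rw [norm_one, Padic.norm_p_pow]; exact hzlt1 _ hw1)]
      exact norm_one
    have hβ0 : (1 : ℚ_[p]) + (p : ℚ_[p]) ^ w ≠ 0 := by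
      intro h; rw [h, norm_zero] at hβnorm; norm_num at hβnorm
    have hβD : ‖((1 : ℚ_[p]) + (p : ℚ_[p]) ^ w) ^ D‖ = 1 := by
      rw [norm_pow, hβnorm, one_pow]
    have hr1 : 1 ≤ r := by omega
    have hd2 : ‖(p : ℚ_[p]) ^ (-(-(r : ℤ))) * ((1 : ℚ_[p]) + (p : ℚ_[p]) ^ w) ^ D‖ < 1 := by
      rw [norm_mul, neg_neg, Padic.norm_p_zpow, hβD, mul_one]
      exact hzlt1 _ hr1
    have hsub : ‖(p : ℚ_[p]) ^ (-(-(r : ℤ))) * (1 : ℚ_[p]) ^ D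
        - (p : ℚ_[p]) ^ (-(-(r : ℤ))) * ((1 : ℚ_[p]) + (p : ℚ_[p]) ^ w) ^ D‖
        = (p : ℝ) ^ (-(m : ℤ)) := by
      rw [← mul_sub, norm_mul, neg_neg, Padic.norm_p_zpow, one_pow, norm_sub_rev,
        padic_norm_one_add_p_pow D w hD hwc, ← zpow_add₀ (ne_of_gt hppos)]
      congr 1
      omega
    refine ⟨1, (1 : ℚ_[p]) + (p : ℚ_[p]) ^ w, -(r : ℤ), one_ne_zero, hβ0, ?_, ?_, ?_⟩
    · exact key _ _ _ hβ0 hsub hd2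
    all_goals {
      have hval : ((p : ℚ_[p]) ^ (-(2 * -(r : ℤ))) * (1 : ℚ_[p]) ^ D
          * ((1 : ℚ_[p]) + (p : ℚ_[p]) ^ w) ^ D).valuation = 2 * (r : ℤ) := by
        rw [one_pow, mul_one,
          Padic.valuation_mul (zpow_ne_zero _ hp0) (pow_ne_zero _ hβ0),
          padic_val_p_zpow, padic_val_eq_zero_of_norm_one (pow_ne_zero _ hβ0) hβD]
        omega
      rw [hval]
      have h2r : 2 * r ≤ k₀ + 1 := by omega
      have h3a : k₀ ≤ 2 * r := by omega
      have hkD : k₀ ≤ D * k₀ := Nat.le_mul_of_pos_left k₀ hD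
      have h3b : 2 * r ≤ 3 * D * k₀ := by nlinarith
      first
      | exact_mod_cast h3a
      | exact_mod_cast h3b
    }
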